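/- One-dimensional integration by parts with jump correction. Let a < b be real numbers and let μ and ν be finite signed Borel measures on [a,b]; set f(x) = μ([a,x]) and g(x) = ν([a,x]) for x ∈ [a,b], so that f(x) − f(x−) = μ({x}) and g(x) − g(x−) = ν({x}) for x ∈ (a,b]. Then ∫_{(a,b]} f(x) dν(x) = − ∫_{(a,b]} g(x) dμ(x) + f(b)g(b) − f(a)g(a) + Σ_{x ∈ (a,b]} μ({x}) ν({x}), where the sum runs over the (at most countably many) points x ∈ (a,b] that are atoms of both μ and ν, and is absolutely convergent. In particular, the correction term Σ_x μ({x}) ν({x}) vanishes if f or g is continuous. -/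

import Mathlib

open MeasureTheory Set

/-- Integral of a bounded Borel function against a finite signed measure, over a set,
defined via the Jordan decomposition. -/
noncomputable def sInt {α : Type*} [MeasurableSpace α]
    (lam : MeasureTheory.SignedMeasure α) (s : Set α) (h : α → ℝ) : ℝ :=
  (∫ x in s, h x ∂lam.toJordanDecomposition.posPart) -
    ∫ x in s, h x ∂lam.toJordanDecomposition.negPart

namespace IbpAux

/-- A signed measure evaluated at a measurable set equals the difference of the
Jordan parts. -/
lemma signed_apply {α : Type*} [MeasurableSpace α] (μ : MeasureTheory.SignedMeasure α)
    {E : Set α} (hE : MeasurableSet E) :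
    (μ E : ℝ) = (μ.toJordanDecomposition.posPart E).toReal
      - (μ.toJordanDecomposition.negPart E).toReal := by
  conv_lhs => rw [← μ.toSignedMeasure_toJordanDecomposition]
  rw [MeasureTheory.JordanDecomposition.toSignedMeasure, MeasureTheory.VectorMeasure.sub_apply,
    MeasureTheory.Measure.toSignedMeasure_apply_measurable hE,
    MeasureTheory.Measure.toSignedMeasure_apply_measurable hE]
  rfl

/-- The set of atoms of a finite measure is countable. -/
lemma countable_atoms (ρ : Measure ℝ) [IsFiniteMeasure ρ] :
    Set.Countable {x : ℝ | 0 < ρ {x}} := by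
  have := Measure.countable_meas_pos_of_disjoint_iUnion₀ (μ := ρ)
    (As := fun x : ℝ => ({x} : Set ℝ))
    (fun x => (measurableSet_singleton x).nullMeasurableSet)
    (fun x y hxy => (Set.disjoint_singleton.2 hxy).aedisjoint)
  simpa using this

/-- The lintegral of `x ↦ ρ {x}` over a measurable set is a sum over diagonal atoms. -/
lemma lintegral_singleton_meas (ρ σ : Measure ℝ) [IsFiniteMeasure ρ] {s : Set ℝ}
    (hs : MeasurableSet s) :
    ∫⁻ x in s, ρ {x} ∂σ = ∑' x : s, σ {(x : ℝ)} * ρ {(x : ℝ)} := by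
  set D := {x : ℝ | 0 < ρ {x}} with hD
  have hDc : D.Countable := countable_atoms ρ
  have hDm : MeasurableSet D := hDc.measurableSet
  have hzero : ∀ x : ℝ, x ∉ D → ρ {x} = 0 := by
    intro x hx
    simp only [hD, mem_setOf_eq, not_lt, nonpos_iff_eq_zero] at hx
    exact hx
  have hsplit : s = (s ∩ D) ∪ (s \ D) := (Set.inter_union_diff s D).symm
  have h1 : ∫⁻ x in s, ρ {x} ∂σ
      = ∫⁻ x in s ∩ D, ρ {x} ∂σ + ∫⁻ x in s \ D, ρ {x} ∂σ := by
    conv_lhs => rw [hsplit]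
    exact lintegral_union (hs.diff hDm) (Set.disjoint_sdiff_right.mono_left inter_subset_right)
  have h2 : ∫⁻ x in s \ D, ρ {x} ∂σ = 0 := by
    have : ∫⁻ x in s \ D, ρ {x} ∂σ = ∫⁻ _ in s \ D, (0 : ENNReal) ∂σ :=
      setLIntegral_congr_fun (hs.diff hDm)
        (fun x hx => hzero x hx.2)
    simp [this]
  have h3 : ∫⁻ x in s ∩ D, ρ {x} ∂σ = ∑' x : (s ∩ D : Set ℝ), ρ {(x : ℝ)} * σ {(x : ℝ)} :=
    lintegral_countable _ (hDc.mono inter_subset_right)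
  rw [h1, h2, add_zero, h3]
  rw [tsum_subtype (s ∩ D) (fun x => ρ {x} * σ {x}), tsum_subtype s (fun x => σ {x} * ρ {x})]
  congr 1
  funext x
  by_cases hxs : x ∈ s
  · by_cases hxD : x ∈ D
    · rw [Set.indicator_of_mem (show x ∈ s ∩ D from ⟨hxs, hxD⟩),
        Set.indicator_of_mem hxs, mul_comm]
    · rw [Set.indicator_of_notMem (show x ∉ s ∩ D from fun h => hxD h.2),
        Set.indicator_of_mem hxs, hzero x hxD, mul_zero]
  · rw [Set.indicator_of_notMem (show x ∉ s ∩ D from fun h => hxs h.1),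
      Set.indicator_of_notMem hxs]

/-- The diagonal sum of atoms is finite. -/
lemma diag_ne_top (a b : ℝ) (ρ σ : Measure ℝ) [IsFiniteMeasure ρ] [IsFiniteMeasure σ] :
    ∑' x : Set.Ioc a b, σ {(x : ℝ)} * ρ {(x : ℝ)} ≠ ⊤ := by
  have h1 : ∑' x : Set.Ioc a b, σ {(x : ℝ)} * ρ {(x : ℝ)}
      ≤ ∑' x : Set.Ioc a b, σ {(x : ℝ)} * ρ Set.univ :=
    ENNReal.tsum_le_tsum fun x => mul_le_mul_right (measure_mono (subset_univ _)) _
  have h2 : ∑' x : Set.Ioc a b, σ {(x : ℝ)} * ρ Set.univ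
      = (∑' x : Set.Ioc a b, σ {(x : ℝ)}) * ρ Set.univ := ENNReal.tsum_mul_right
  have h3 : ∑' x : Set.Ioc a b, σ {(x : ℝ)} ≤ σ Set.univ := by
    refine le_trans (tsum_meas_le_meas_iUnion_of_disjoint σ
      (As := fun x : Set.Ioc a b => ({(x : ℝ)} : Set ℝ))
      (fun _ => measurableSet_singleton _) ?_) (measure_mono (subset_univ _))
    intro x y hxy
    simp only [Function.onFun, Set.disjoint_singleton]
    exact fun h => hxy (Subtype.ext h)
  refine ne_of_lt (lt_of_le_of_lt (le_trans h1 (le_of_eq h2)) ?_)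
  exact ENNReal.mul_lt_top
    (lt_of_le_of_lt h3 (measure_lt_top _ _)) (measure_lt_top _ _)

/-- The core double-counting identity, in `ℝ≥0∞`. -/
lemma core_lintegral (a b : ℝ) (hab : a ≤ b) (ρ σ : Measure ℝ)
    [IsFiniteMeasure ρ] [IsFiniteMeasure σ] :
    (∫⁻ x in Set.Ioc a b, ρ (Set.Icc a x) ∂σ) + (∫⁻ x in Set.Ioc a b, σ (Set.Icc a x) ∂ρ)
        + σ {a} * ρ {a}
      = σ (Set.Icc a b) * ρ (Set.Icc a b)
        + ∑' x : Set.Ioc a b, σ {(x : ℝ)} * ρ {(x : ℝ)} := by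
  set A : Set (ℝ × ℝ) := {p | p.1 ∈ Set.Ioc a b ∧ p.2 ∈ Set.Icc a p.1} with hA
  set B : Set (ℝ × ℝ) := {p | p.2 ∈ Set.Ioc a b ∧ p.1 ∈ Set.Icc a p.2} with hB
  have mA : MeasurableSet A := by
    have : A = (Set.Ioc a b ×ˢ Set.Ici a) ∩ {p : ℝ × ℝ | p.2 ≤ p.1} := by
      ext ⟨x, y⟩
      simp only [hA, Set.mem_setOf_eq, Set.mem_inter_iff, Set.mem_prod, Set.mem_Ioc,
        Set.mem_Icc, Set.mem_Ici]
      tauto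
    rw [this]
    exact (measurableSet_Ioc.prod measurableSet_Ici).inter
      (measurableSet_le measurable_snd measurable_fst)
  have mB : MeasurableSet B := by
    have : B = (Set.Ici a ×ˢ Set.Ioc a b) ∩ {p : ℝ × ℝ | p.1 ≤ p.2} := by
      ext ⟨x, y⟩
      simp only [hB, Set.mem_setOf_eq, Set.mem_inter_iff, Set.mem_prod, Set.mem_Ioc,
        Set.mem_Icc, Set.mem_Ici]
      tauto
    rw [this]
    exact (measurableSet_Ici.prod measurableSet_Ioc).inter
      (measurableSet_le measurable_fst measurable_snd)
  have hAval : (σ.prod ρ) A = ∫⁻ x in Set.Ioc a b, ρ (Set.Icc a x) ∂σ := by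
    rw [Measure.prod_apply mA, ← lintegral_indicator measurableSet_Ioc]
    congr 1
    funext x
    by_cases hx : x ∈ Set.Ioc a b
    · have hpre : Prod.mk x ⁻¹' A = Set.Icc a x := by
        ext y; exact ⟨fun h => h.2, fun h => ⟨hx, h⟩⟩
      rw [hpre, Set.indicator_of_mem hx]
    · have hpre : Prod.mk x ⁻¹' A = (∅ : Set ℝ) := by
        ext y
        simp only [hA, Set.mem_preimage, Set.mem_setOf_eq, Set.mem_empty_iff_false, iff_false]
        exact fun h => hx h.1
      rw [hpre, Set.indicator_of_notMem hx, measure_empty]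
  have hBval : (σ.prod ρ) B = ∫⁻ x in Set.Ioc a b, σ (Set.Icc a x) ∂ρ := by
    rw [Measure.prod_apply_symm mB, ← lintegral_indicator measurableSet_Ioc]
    congr 1
    funext y
    by_cases hy : y ∈ Set.Ioc a b
    · have hpre : (fun x => (x, y)) ⁻¹' B = Set.Icc a y := by
        ext x; exact ⟨fun h => h.2, fun h => ⟨hy, h⟩⟩
      rw [hpre, Set.indicator_of_mem hy]
    · have hpre : (fun x => (x, y)) ⁻¹' B = (∅ : Set ℝ) := by
        ext x
        simp only [hB, Set.mem_preimage, Set.mem_setOf_eq, Set.mem_empty_iff_false, iff_false]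
        exact fun h => hy h.1
      rw [hpre, Set.indicator_of_notMem hy, measure_empty]
  have hU : A ∪ B = (Set.Icc a b ×ˢ Set.Icc a b) \ {((a : ℝ), (a : ℝ))} := by
    ext ⟨x, y⟩
    simp only [hA, hB, Set.mem_union, Set.mem_setOf_eq, Set.mem_diff, Set.mem_prod,
      Set.mem_Ioc, Set.mem_Icc, Set.mem_singleton_iff, Prod.mk.injEq]
    constructor
    · rintro (⟨⟨h1, h2⟩, h3, h4⟩ | ⟨⟨h1, h2⟩, h3, h4⟩)
      · exact ⟨⟨⟨le_of_lt h1, h2⟩, h3, le_trans h4 h2⟩, fun hc => absurd hc.1 (ne_of_gt h1)⟩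
      · exact ⟨⟨⟨h3, le_trans h4 h2⟩, le_of_lt h1, h2⟩, fun hc => absurd hc.2 (ne_of_gt h1)⟩
    · rintro ⟨⟨⟨hx1, hx2⟩, hy1, hy2⟩, hne⟩
      rcases le_total y x with hyx | hxy
      · left
        refine ⟨⟨lt_of_le_of_ne hx1 fun h => hne ?_, hx2⟩, hy1, hyx⟩
        exact ⟨h.symm, le_antisymm (h ▸ hyx) hy1⟩
      · right
        refine ⟨⟨lt_of_le_of_ne hy1 fun h => hne ?_, hy2⟩, hx1, hxy⟩
        exact ⟨le_antisymm (h ▸ hxy) hx1, h.symm⟩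
  have hI : A ∩ B = {p : ℝ × ℝ | p.1 ∈ Set.Ioc a b ∧ p.2 = p.1} := by
    ext ⟨x, y⟩
    simp only [hA, hB, Set.mem_inter_iff, Set.mem_setOf_eq, Set.mem_Ioc, Set.mem_Icc]
    constructor
    · rintro ⟨⟨⟨h1, h2⟩, h3, h4⟩, ⟨h5, h6⟩, h7, h8⟩
      exact ⟨⟨h1, h2⟩, le_antisymm h4 h8⟩
    · rintro ⟨⟨h1, h2⟩, rfl⟩
      exact ⟨⟨⟨h1, h2⟩, le_of_lt h1, le_refl _⟩, ⟨h1, h2⟩, le_of_lt h1, le_refl _⟩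
  have mDiag : MeasurableSet {p : ℝ × ℝ | p.1 ∈ Set.Ioc a b ∧ p.2 = p.1} := by
    have : {p : ℝ × ℝ | p.1 ∈ Set.Ioc a b ∧ p.2 = p.1}
        = (Set.Ioc a b ×ˢ (Set.univ : Set ℝ)) ∩ {p : ℝ × ℝ | p.2 = p.1} := by
      ext ⟨x, y⟩; simp
    rw [this]
    exact (measurableSet_Ioc.prod MeasurableSet.univ).inter
      (measurableSet_eq_fun measurable_snd measurable_fst)
  have hDiagVal : (σ.prod ρ) (A ∩ B)
      = ∑' x : Set.Ioc a b, σ {(x : ℝ)} * ρ {(x : ℝ)} := by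
    rw [hI, Measure.prod_apply mDiag]
    have : (∫⁻ x, ρ (Prod.mk x ⁻¹' {p : ℝ × ℝ | p.1 ∈ Set.Ioc a b ∧ p.2 = p.1}) ∂σ)
        = ∫⁻ x in Set.Ioc a b, ρ {x} ∂σ := by
      rw [← lintegral_indicator measurableSet_Ioc]
      congr 1
      funext x
      by_cases hx : x ∈ Set.Ioc a b
      · have hpre : Prod.mk x ⁻¹' {p : ℝ × ℝ | p.1 ∈ Set.Ioc a b ∧ p.2 = p.1} = {x} := by
          ext y; exact ⟨fun h => h.2, fun h => ⟨hx, h⟩⟩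
        rw [hpre, Set.indicator_of_mem hx]
      · have hpre : Prod.mk x ⁻¹' {p : ℝ × ℝ | p.1 ∈ Set.Ioc a b ∧ p.2 = p.1}
            = (∅ : Set ℝ) := by
          ext y
          simp only [Set.mem_preimage, Set.mem_setOf_eq, Set.mem_empty_iff_false, iff_false]
          exact fun h => hx h.1
        rw [hpre, Set.indicator_of_notMem hx, measure_empty]
    rw [this, lintegral_singleton_meas ρ σ measurableSet_Ioc]
  have hUval : (σ.prod ρ) (A ∪ B) + σ {a} * ρ {a}
      = σ (Set.Icc a b) * ρ (Set.Icc a b) := by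
    rw [hU]
    have hmem : ({((a : ℝ), (a : ℝ))} : Set (ℝ × ℝ)) ⊆ Set.Icc a b ×ˢ Set.Icc a b := by
      intro p hp
      rw [Set.mem_singleton_iff] at hp
      subst hp
      exact ⟨⟨le_refl a, hab⟩, le_refl a, hab⟩
    have h1 := measure_diff_add_inter (μ := σ.prod ρ) (Set.Icc a b ×ˢ Set.Icc a b)
      (measurableSet_singleton ((a : ℝ), (a : ℝ)))
    rw [Set.inter_eq_self_of_subset_right hmem] at h1
    have hsing : (σ.prod ρ) ({((a : ℝ), (a : ℝ))} : Set (ℝ × ℝ)) = σ {a} * ρ {a} := by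
      rw [← Set.singleton_prod_singleton, Measure.prod_prod]
    rw [hsing] at h1
    rw [h1, Measure.prod_prod]
  calc (∫⁻ x in Set.Ioc a b, ρ (Set.Icc a x) ∂σ)
        + (∫⁻ x in Set.Ioc a b, σ (Set.Icc a x) ∂ρ) + σ {a} * ρ {a}
      = (σ.prod ρ) A + (σ.prod ρ) B + σ {a} * ρ {a} := by rw [hAval, hBval]
    _ = ((σ.prod ρ) (A ∪ B) + (σ.prod ρ) (A ∩ B)) + σ {a} * ρ {a} := by
        rw [measure_union_add_inter A mB]
    _ = ((σ.prod ρ) (A ∪ B) + σ {a} * ρ {a}) + (σ.prod ρ) (A ∩ B) := by ring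
    _ = σ (Set.Icc a b) * ρ (Set.Icc a b)
          + ∑' x : Set.Ioc a b, σ {(x : ℝ)} * ρ {(x : ℝ)} := by rw [hUval, hDiagVal]

/-- Measurability of `x ↦ ρ (Icc a x)`. -/
lemma meas_Icc (a : ℝ) (ρ : Measure ℝ) [IsFiniteMeasure ρ] :
    Measurable fun x : ℝ => ρ (Set.Icc a x) := by
  have ms : MeasurableSet {p : ℝ × ℝ | p.2 ∈ Set.Icc a p.1} := by
    have : {p : ℝ × ℝ | p.2 ∈ Set.Icc a p.1}
        = ((Set.univ : Set ℝ) ×ˢ Set.Ici a) ∩ {p : ℝ × ℝ | p.2 ≤ p.1} := by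
      ext ⟨x, y⟩; simp [Set.mem_Icc, and_comm]
    rw [this]
    exact (MeasurableSet.univ.prod measurableSet_Ici).inter
      (measurableSet_le measurable_snd measurable_fst)
  have h := measurable_measure_prodMk_left (ν := ρ) ms
  have hpre : ∀ x : ℝ, Prod.mk x ⁻¹' {p : ℝ × ℝ | p.2 ∈ Set.Icc a p.1} = Set.Icc a x := by
    intro x; ext y; simp
  simpa only [hpre] using h

/-- Integrability of `x ↦ (ρ (Icc a x)).toReal`. -/
lemma integrable_meas_Icc (a : ℝ) (ρ σ : Measure ℝ) [IsFiniteMeasure ρ] [IsFiniteMeasure σ]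
    (s : Set ℝ) :
    Integrable (fun x : ℝ => (ρ (Set.Icc a x)).toReal) (σ.restrict s) := by
  refine Integrable.mono' (integrable_const (ρ Set.univ).toReal)
    ((meas_Icc a ρ).ennreal_toReal.aestronglyMeasurable) (Filter.Eventually.of_forall fun x => ?_)
  rw [Real.norm_eq_abs, abs_of_nonneg ENNReal.toReal_nonneg]
  exact ENNReal.toReal_mono (measure_ne_top _ _) (measure_mono (subset_univ _))

/-- The core identity, real-valued, with summability. -/
lemma core_real (a b : ℝ) (hab : a ≤ b) (ρ σ : Measure ℝ)
    [IsFiniteMeasure ρ] [IsFiniteMeasure σ] :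
    Summable (fun x : Set.Ioc a b => (σ {(x : ℝ)}).toReal * (ρ {(x : ℝ)}).toReal) ∧
    (∫ x in Set.Ioc a b, (ρ (Set.Icc a x)).toReal ∂σ)
        + (∫ x in Set.Ioc a b, (σ (Set.Icc a x)).toReal ∂ρ)
      = (σ (Set.Icc a b)).toReal * (ρ (Set.Icc a b)).toReal
          - (σ {a}).toReal * (ρ {a}).toReal
          + ∑' x : Set.Ioc a b, (σ {(x : ℝ)}).toReal * (ρ {(x : ℝ)}).toReal := by
  have hTne : ∑' x : Set.Ioc a b, σ {(x : ℝ)} * ρ {(x : ℝ)} ≠ ⊤ := diag_ne_top a b ρ σ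
  have hterm : ∀ x : Set.Ioc a b, σ {(x : ℝ)} * ρ {(x : ℝ)} ≠ ⊤ := fun x =>
    ENNReal.mul_ne_top (measure_ne_top _ _) (measure_ne_top _ _)
  have hsummable : Summable (fun x : Set.Ioc a b => (σ {(x : ℝ)}).toReal * (ρ {(x : ℝ)}).toReal) := by
    have := ENNReal.summable_toReal hTne
    refine this.congr fun x => ?_
    rw [ENNReal.toReal_mul]
  refine ⟨hsummable, ?_⟩
  have hI1ne : (∫⁻ x in Set.Ioc a b, ρ (Set.Icc a x) ∂σ) ≠ ⊤ := by
    refine ne_of_lt (lt_of_le_of_lt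
      (lintegral_mono fun x => measure_mono (subset_univ _)) ?_)
    rw [setLIntegral_const]
    exact ENNReal.mul_lt_top (measure_lt_top _ _) (measure_lt_top _ _)
  have hI2ne : (∫⁻ x in Set.Ioc a b, σ (Set.Icc a x) ∂ρ) ≠ ⊤ := by
    refine ne_of_lt (lt_of_le_of_lt
      (lintegral_mono fun x => measure_mono (subset_univ _)) ?_)
    rw [setLIntegral_const]
    exact ENNReal.mul_lt_top (measure_lt_top _ _) (measure_lt_top _ _)
  have e1 : ∫ x in Set.Ioc a b, (ρ (Set.Icc a x)).toReal ∂σ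
      = (∫⁻ x in Set.Ioc a b, ρ (Set.Icc a x) ∂σ).toReal :=
    integral_toReal ((meas_Icc a ρ).aemeasurable)
      (Filter.Eventually.of_forall fun x => measure_lt_top _ _)
  have e2 : ∫ x in Set.Ioc a b, (σ (Set.Icc a x)).toReal ∂ρ
      = (∫⁻ x in Set.Ioc a b, σ (Set.Icc a x) ∂ρ).toReal :=
    integral_toReal ((meas_Icc a σ).aemeasurable)
      (Filter.Eventually.of_forall fun x => measure_lt_top _ _)
  have key := core_lintegral a b hab ρ σ
  have := congrArg ENNReal.toReal key
  rw [ENNReal.toReal_add (by exact ENNReal.add_ne_top.2 ⟨hI1ne, hI2ne⟩)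
      (ENNReal.mul_ne_top (measure_ne_top _ _) (measure_ne_top _ _)),
    ENNReal.toReal_add hI1ne hI2ne,
    ENNReal.toReal_add (ENNReal.mul_ne_top (measure_ne_top _ _) (measure_ne_top _ _)) hTne,
    ENNReal.toReal_mul, ENNReal.toReal_mul] at this
  have hts : (∑' x : Set.Ioc a b, σ {(x : ℝ)} * ρ {(x : ℝ)}).toReal
      = ∑' x : Set.Ioc a b, (σ {(x : ℝ)}).toReal * (ρ {(x : ℝ)}).toReal := by
    rw [ENNReal.tsum_toReal_eq hterm]
    exact tsum_congr fun x => ENNReal.toReal_mul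
  rw [hts] at this
  rw [e1, e2]
  linarith

/-- Continuity of the cumulative function kills the atoms. -/
lemma atom_zero_of_continuousOn (a b : ℝ) (μ : MeasureTheory.SignedMeasure ℝ)
    (hc : ContinuousOn (fun x => (μ (Set.Icc a x) : ℝ)) (Set.Icc a b))
    {x : ℝ} (hx : x ∈ Set.Ioc a b) : (μ {x} : ℝ) = 0 := by
  obtain ⟨hax, hxb⟩ := hx
  set ρ := μ.toJordanDecomposition.posPart with hρ
  set τ := μ.toJordanDecomposition.negPart with hτ
  set u : ℕ → ℝ := fun n => x - (x - a) / (n + 2) with hu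
  have hxa : 0 < x - a := sub_pos.2 hax
  have hu_lt : ∀ n, u n < x := by
    intro n
    have : 0 < (x - a) / (n + 2) := div_pos hxa (by positivity)
    simp only [hu]; linarith
  have hu_gt : ∀ n, a < u n := by
    intro n
    have h2 : (x - a) / (n + 2) < x - a := by
      rw [div_lt_iff₀ (by positivity : (0:ℝ) < (n : ℝ) + 2)]
      nlinarith
    simp only [hu]; linarith
  have hu_mono : Monotone u := by
    intro m n hmn
    simp only [hu, sub_le_sub_iff_left]
    apply div_le_div_of_nonneg_left (le_of_lt hxa) (by positivity)
    have : (m : ℝ) ≤ (n : ℝ) := Nat.cast_le.2 hmn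
    linarith
  have hu_tendsto : Filter.Tendsto u Filter.atTop (nhds x) := by
    have h1 : Filter.Tendsto (fun n : ℕ => (x - a) / (n + 2)) Filter.atTop (nhds 0) := by
      apply Filter.Tendsto.div_atTop tendsto_const_nhds
      exact Filter.tendsto_atTop_add_const_right _ 2 tendsto_natCast_atTop_atTop
    have := Filter.Tendsto.sub (tendsto_const_nhds (x := x)) h1
    simpa using this
  have hUnion : (⋃ n, Set.Icc a (u n)) = Set.Ico a x := by
    ext y
    simp only [Set.mem_iUnion, Set.mem_Icc, Set.mem_Ico]
    constructor
    · rintro ⟨n, h1, h2⟩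
      exact ⟨h1, lt_of_le_of_lt h2 (hu_lt n)⟩
    · rintro ⟨h1, h2⟩
      have : ∀ᶠ n in Filter.atTop, y < u n :=
        hu_tendsto.eventually (eventually_gt_nhds h2)
      obtain ⟨n, hn⟩ := this.exists
      exact ⟨n, h1, le_of_lt hn⟩
  have hmonoIcc : Monotone fun n => Set.Icc a (u n) := fun m n hmn =>
    Set.Icc_subset_Icc le_rfl (hu_mono hmn)
  have hρlim : Filter.Tendsto (fun n => ρ (Set.Icc a (u n))) Filter.atTop
      (nhds (ρ (Set.Ico a x))) := by
    have := tendsto_measure_iUnion_atTop (μ := ρ) hmonoIcc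
    rwa [hUnion] at this
  have hτlim : Filter.Tendsto (fun n => τ (Set.Icc a (u n))) Filter.atTop
      (nhds (τ (Set.Ico a x))) := by
    have := tendsto_measure_iUnion_atTop (μ := τ) hmonoIcc
    rwa [hUnion] at this
  have hρlimR : Filter.Tendsto (fun n => (ρ (Set.Icc a (u n))).toReal) Filter.atTop
      (nhds ((ρ (Set.Ico a x)).toReal)) :=
    (ENNReal.tendsto_toReal (measure_ne_top _ _)).comp hρlim
  have hτlimR : Filter.Tendsto (fun n => (τ (Set.Icc a (u n))).toReal) Filter.atTop
      (nhds ((τ (Set.Ico a x)).toReal)) :=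
    (ENNReal.tendsto_toReal (measure_ne_top _ _)).comp hτlim
  have hflim : Filter.Tendsto (fun n => (μ (Set.Icc a (u n)) : ℝ)) Filter.atTop
      (nhds ((ρ (Set.Ico a x)).toReal - (τ (Set.Ico a x)).toReal)) := by
    have := hρlimR.sub hτlimR
    refine this.congr fun n => ?_
    rw [← signed_apply μ measurableSet_Icc]
  have hxmem : x ∈ Set.Icc a b := ⟨le_of_lt hax, hxb⟩
  have humem : ∀ n, u n ∈ Set.Icc a b :=
    fun n => ⟨le_of_lt (hu_gt n), le_trans (le_of_lt (hu_lt n)) hxb⟩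
  have hflim2 : Filter.Tendsto (fun n => (μ (Set.Icc a (u n)) : ℝ)) Filter.atTop
      (nhds (μ (Set.Icc a x) : ℝ)) := by
    have hcw : ContinuousWithinAt (fun y => (μ (Set.Icc a y) : ℝ)) (Set.Icc a b) x :=
      hc x hxmem
    have htend : Filter.Tendsto u Filter.atTop (nhdsWithin x (Set.Icc a b)) := by
      rw [tendsto_nhdsWithin_iff]
      exact ⟨hu_tendsto, Filter.Eventually.of_forall humem⟩
    exact hcw.tendsto.comp htend
  have heq : (μ (Set.Icc a x) : ℝ) = (ρ (Set.Ico a x)).toReal - (τ (Set.Ico a x)).toReal :=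
    tendsto_nhds_unique hflim2 hflim
  have hIco : (μ (Set.Ico a x) : ℝ) = (ρ (Set.Ico a x)).toReal - (τ (Set.Ico a x)).toReal :=
    signed_apply μ measurableSet_Ico
  have hsplit : (μ (Set.Icc a x) : ℝ) = μ (Set.Ico a x) + μ {x} := by
    have hd : Disjoint (Set.Ico a x) ({x} : Set ℝ) := by
      simp [Set.disjoint_singleton_right]
    have hun : Set.Ico a x ∪ {x} = Set.Icc a x := Set.Ico_union_right (le_of_lt hax)
    rw [← hun]
    exact MeasureTheory.VectorMeasure.of_union hd measurableSet_Ico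
      (measurableSet_singleton x)
  rw [heq, hIco] at hsplit
  linarith

end IbpAux

/-- One-dimensional integration by parts with jump correction: with `f(x) = μ([a,x])` and
`g(x) = ν([a,x])`, the sum `Σ_{x ∈ (a,b]} μ({x})ν({x})` is absolutely convergent and
`∫_(a,b] f dν = − ∫_(a,b] g dμ + f(b)g(b) − f(a)g(a) + Σ_{x ∈ (a,b]} μ({x})ν({x})`;
moreover the correction term vanishes if `f` or `g` is continuous. -/
theorem ibp_one_dim_jump (a b : ℝ) (hab : a < b)
    (μ ν : MeasureTheory.SignedMeasure ℝ)
    (hμ : ∀ E : Set ℝ, MeasurableSet E → E ⊆ (Set.Icc a b)ᶜ → μ E = 0)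
    (hν : ∀ E : Set ℝ, MeasurableSet E → E ⊆ (Set.Icc a b)ᶜ → ν E = 0) :
    Summable (fun x : Set.Ioc a b => (μ {(x : ℝ)} : ℝ) * ν {(x : ℝ)}) ∧
    (sInt ν (Set.Ioc a b) (fun x => μ (Set.Icc a x)) =
      - sInt μ (Set.Ioc a b) (fun x => ν (Set.Icc a x)) +
        μ (Set.Icc a b) * ν (Set.Icc a b) - μ (Set.Icc a a) * ν (Set.Icc a a) +
        ∑' x : Set.Ioc a b, (μ {(x : ℝ)} : ℝ) * ν {(x : ℝ)}) ∧
    ((ContinuousOn (fun x => (μ (Set.Icc a x) : ℝ)) (Set.Icc a b) ∨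
      ContinuousOn (fun x => (ν (Set.Icc a x) : ℝ)) (Set.Icc a b)) →
      ∑' x : Set.Ioc a b, (μ {(x : ℝ)} : ℝ) * ν {(x : ℝ)} = 0) := by
  classical
  set P1 := μ.toJordanDecomposition.posPart with hP1
  set P2 := μ.toJordanDecomposition.negPart with hP2
  set N1 := ν.toJordanDecomposition.posPart with hN1
  set N2 := ν.toJordanDecomposition.negPart with hN2
  have hab' : a ≤ b := le_of_lt hab
  obtain ⟨s11, e11⟩ := IbpAux.core_real a b hab' P1 N1
  obtain ⟨s12, e12⟩ := IbpAux.core_real a b hab' P1 N2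
  obtain ⟨s21, e21⟩ := IbpAux.core_real a b hab' P2 N1
  obtain ⟨s22, e22⟩ := IbpAux.core_real a b hab' P2 N2
  -- pointwise expansion of μ{x}ν{x}
  have hμx : ∀ x : ℝ, (μ {x} : ℝ) = (P1 {x}).toReal - (P2 {x}).toReal :=
    fun x => IbpAux.signed_apply μ (measurableSet_singleton x)
  have hνx : ∀ x : ℝ, (ν {x} : ℝ) = (N1 {x}).toReal - (N2 {x}).toReal :=
    fun x => IbpAux.signed_apply ν (measurableSet_singleton x)
  have hfuneq : (fun x : Set.Ioc a b => (μ {(x : ℝ)} : ℝ) * ν {(x : ℝ)})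
      = fun x : Set.Ioc a b =>
          ((N1 {(x : ℝ)}).toReal * (P1 {(x : ℝ)}).toReal
            - (N2 {(x : ℝ)}).toReal * (P1 {(x : ℝ)}).toReal)
          - ((N1 {(x : ℝ)}).toReal * (P2 {(x : ℝ)}).toReal
            - (N2 {(x : ℝ)}).toReal * (P2 {(x : ℝ)}).toReal) := by
    funext x
    rw [hμx, hνx]
    ring
  have hsummable : Summable (fun x : Set.Ioc a b => (μ {(x : ℝ)} : ℝ) * ν {(x : ℝ)}) := by
    rw [hfuneq]
    exact (s11.sub s12).sub (s21.sub s22)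
  have htsum : ∑' x : Set.Ioc a b, (μ {(x : ℝ)} : ℝ) * ν {(x : ℝ)}
      = ((∑' x : Set.Ioc a b, (N1 {(x : ℝ)}).toReal * (P1 {(x : ℝ)}).toReal)
          - (∑' x : Set.Ioc a b, (N2 {(x : ℝ)}).toReal * (P1 {(x : ℝ)}).toReal))
        - ((∑' x : Set.Ioc a b, (N1 {(x : ℝ)}).toReal * (P2 {(x : ℝ)}).toReal)
          - (∑' x : Set.Ioc a b, (N2 {(x : ℝ)}).toReal * (P2 {(x : ℝ)}).toReal)) := by
    rw [hfuneq, Summable.tsum_sub (s11.sub s12) (s21.sub s22), Summable.tsum_sub s11 s12,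
      Summable.tsum_sub s21 s22]
  -- expansion of integrals
  have hIccx : ∀ x : ℝ, (μ (Set.Icc a x) : ℝ) = (P1 (Set.Icc a x)).toReal
      - (P2 (Set.Icc a x)).toReal := fun x => IbpAux.signed_apply μ measurableSet_Icc
  have hIccx' : ∀ x : ℝ, (ν (Set.Icc a x) : ℝ) = (N1 (Set.Icc a x)).toReal
      - (N2 (Set.Icc a x)).toReal := fun x => IbpAux.signed_apply ν measurableSet_Icc
  have hsν : sInt ν (Set.Ioc a b) (fun x => μ (Set.Icc a x))
      = ((∫ x in Set.Ioc a b, (P1 (Set.Icc a x)).toReal ∂N1)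
          - (∫ x in Set.Ioc a b, (P2 (Set.Icc a x)).toReal ∂N1))
        - ((∫ x in Set.Ioc a b, (P1 (Set.Icc a x)).toReal ∂N2)
          - (∫ x in Set.Ioc a b, (P2 (Set.Icc a x)).toReal ∂N2)) := by
    unfold sInt
    rw [show (fun x : ℝ => (μ (Set.Icc a x) : ℝ))
        = fun x => (P1 (Set.Icc a x)).toReal - (P2 (Set.Icc a x)).toReal from funext hIccx]
    rw [integral_sub (IbpAux.integrable_meas_Icc a P1 N1 _) (IbpAux.integrable_meas_Icc a P2 N1 _),
      integral_sub (IbpAux.integrable_meas_Icc a P1 N2 _) (IbpAux.integrable_meas_Icc a P2 N2 _)]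
  have hsμ : sInt μ (Set.Ioc a b) (fun x => ν (Set.Icc a x))
      = ((∫ x in Set.Ioc a b, (N1 (Set.Icc a x)).toReal ∂P1)
          - (∫ x in Set.Ioc a b, (N2 (Set.Icc a x)).toReal ∂P1))
        - ((∫ x in Set.Ioc a b, (N1 (Set.Icc a x)).toReal ∂P2)
          - (∫ x in Set.Ioc a b, (N2 (Set.Icc a x)).toReal ∂P2)) := by
    unfold sInt
    rw [show (fun x : ℝ => (ν (Set.Icc a x) : ℝ))
        = fun x => (N1 (Set.Icc a x)).toReal - (N2 (Set.Icc a x)).toReal from funext hIccx']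
    rw [integral_sub (IbpAux.integrable_meas_Icc a N1 P1 _) (IbpAux.integrable_meas_Icc a N2 P1 _),
      integral_sub (IbpAux.integrable_meas_Icc a N1 P2 _) (IbpAux.integrable_meas_Icc a N2 P2 _)]
  have hμIcc : (μ (Set.Icc a b) : ℝ) = (P1 (Set.Icc a b)).toReal - (P2 (Set.Icc a b)).toReal :=
    IbpAux.signed_apply μ measurableSet_Icc
  have hνIcc : (ν (Set.Icc a b) : ℝ) = (N1 (Set.Icc a b)).toReal - (N2 (Set.Icc a b)).toReal :=
    IbpAux.signed_apply ν measurableSet_Icc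
  have hμa : (μ (Set.Icc a a) : ℝ) = (P1 {a}).toReal - (P2 {a}).toReal := by
    rw [Set.Icc_self]; exact IbpAux.signed_apply μ (measurableSet_singleton a)
  have hνa : (ν (Set.Icc a a) : ℝ) = (N1 {a}).toReal - (N2 {a}).toReal := by
    rw [Set.Icc_self]; exact IbpAux.signed_apply ν (measurableSet_singleton a)
  refine ⟨hsummable, ?_, ?_⟩
  · rw [hsν, hsμ, hμIcc, hνIcc, hμa, hνa, htsum]
    linear_combination e11 - e12 - e21 + e22
  · rintro (hc | hc)
    · have hz : ∀ x : Set.Ioc a b, (μ {(x : ℝ)} : ℝ) * ν {(x : ℝ)} = 0 := fun x => by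
        rw [IbpAux.atom_zero_of_continuousOn a b μ hc x.2, zero_mul]
      rw [tsum_congr hz, tsum_zero]
    · have hz : ∀ x : Set.Ioc a b, (μ {(x : ℝ)} : ℝ) * ν {(x : ℝ)} = 0 := fun x => by
        rw [IbpAux.atom_zero_of_continuousOn a b ν hc x.2, mul_zero]
      rw [tsum_congr hz, tsum_zero]
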